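/- arXiv:1409.0496 — 3 statements merged into one kernel-verified Lean document; each statement's English description precedes it below -/
import Mathlib

section
/- There exists an acceptable numbering that does not have the Kolmogorov property; that is, there is an acceptable numbering φ and a numbering ψ such that for no constant c does it hold that for every index e there exists j ≤ c·e + c with φ_j = ψ_e. -/
/-- A numbering: a family of partial functions `φ_e : ℕ →. ℕ` such that the
two-variable map `(e, x) ↦ φ_e x` is partial recursive. -/
def PRNumbering (φ : ℕ → ℕ →. ℕ) : Prop := Partrec₂ φ

/-- `φ` is acceptable: every numbering translates into it via a computable function. -/
def Acceptable (φ : ℕ → ℕ →. ℕ) : Prop :=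
  ∀ ψ : ℕ → ℕ →. ℕ, PRNumbering ψ → ∃ f : ℕ → ℕ, Computable f ∧ ∀ e, φ (f e) = ψ e

/-- `φ` has the Kolmogorov property: every numbering translates into it with
linearly bounded (not necessarily computable) translation. -/
def KolmogorovProperty (φ : ℕ → ℕ →. ℕ) : Prop :=
  ∀ ψ : ℕ → ℕ →. ℕ, PRNumbering ψ → ∃ c : ℕ, ∀ e, ∃ j, j ≤ c * e + c ∧ φ j = ψ e

/-- `φ` is computably bounded: every numbering translates into it with a
computable bound on the translated index. -/
def ComputablyBounded (φ : ℕ → ℕ →. ℕ) : Prop :=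
  ∀ ψ : ℕ → ℕ →. ℕ, PRNumbering ψ → ∃ f : ℕ → ℕ, Computable f ∧ ∀ e, ∃ j, j ≤ f e ∧ φ j = ψ e

/-- `φ` is polynomially bounded with degree `p`. -/
def PolyBounded (φ : ℕ → ℕ →. ℕ) (p : ℕ) : Prop :=
  ∀ ψ : ℕ → ℕ →. ℕ, PRNumbering ψ → ∃ c : ℕ, ∀ e, ∃ j, j ≤ c * e ^ p + c ∧ φ j = ψ e

/-- The set of `φ`-minimal indices. -/
def MINset (φ : ℕ → ℕ →. ℕ) : Set ℕ := {e | ∀ j < e, φ j ≠ φ e}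

/-- Minimal indices of functions converging exactly on input 0. -/
def Mset (φ : ℕ → ℕ →. ℕ) : Set ℕ :=
  {e | e ∈ MINset φ ∧ (φ e 0).Dom ∧ ∀ x ≥ 1, ¬ (φ e x).Dom}

/-- `minIndex φ e` is the minimal index computing the same function as `e`. -/
noncomputable def minIndex (φ : ℕ → ℕ →. ℕ) (e : ℕ) : ℕ := sInf {j | φ j = φ e}

/-- A partial recursive `U` is optimal: every partial recursive `V` is simulated
with only linear increase of programs. -/
def OptimalMachine (U : ℕ →. ℕ) : Prop :=
  Nat.Partrec U ∧ ∀ V : ℕ →. ℕ, Nat.Partrec V →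
    ∃ c : ℕ, ∀ p, (V p).Dom → ∃ q, q ≤ c * p + c ∧ U q = V p

/-- Kolmogorov complexity of `x` with respect to `U`: the least binary length of
a `U`-program for `x`. (`Nat.size q` is the binary length of `q`.) -/
noncomputable def Cpx (U : ℕ →. ℕ) (x : ℕ) : ℕ :=
  sInf {n | ∃ q, U q = Part.some x ∧ Nat.size q = n}

/-- Kolmogorov complexity of (the canonical code of) a finite set. -/
noncomputable def CpxFinset (U : ℕ →. ℕ) (A : Finset ℕ) : ℕ :=
  Cpx U (Encodable.encode A)

/-- `A` is `(m,k)`-recursive: a computable labelling of `k`-tuples that is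
correct in at least `m` coordinates on every tuple. -/
def MKRecursive (m k : ℕ) (A : Set ℕ) : Prop :=
  ∃ f : (Fin k → ℕ) → Fin k → Bool, Computable f ∧
    ∀ x : Fin k → ℕ, m ≤ {i : Fin k | (f x i = true ↔ x i ∈ A)}.ncard

open Nat.Partrec (Code)
open Nat.Partrec.Code

/-- The standard numbering via codes. -/
def muNum : ℕ → ℕ →. ℕ := fun e => (Denumerable.ofNat Code e).eval

/-- The padded numbering: real content only at perfect squares. -/
def phiNum : ℕ → ℕ →. ℕ := fun j x =>
  bif Nat.sqrt j * Nat.sqrt j == j then muNum (Nat.sqrt j) x else Part.none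

lemma numbering_muNum : PRNumbering muNum :=
  eval_part.comp ((Computable.ofNat Code).comp Computable.fst) Computable.snd

lemma numbering_phiNum : PRNumbering phiNum := by
  have hc : Computable fun p : ℕ × ℕ => (Nat.sqrt p.1 * Nat.sqrt p.1 == p.1) :=
    (Primrec.beq.comp
      (Primrec.nat_mul.comp (Primrec.nat_sqrt.comp .fst) (Primrec.nat_sqrt.comp .fst))
      .fst).to_comp
  have hf : Partrec fun p : ℕ × ℕ => muNum (Nat.sqrt p.1) p.2 :=
    numbering_muNum.comp ((Primrec.nat_sqrt.to_comp).comp Computable.fst) Computable.snd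
  have hg : Partrec fun _ : ℕ × ℕ => (Part.none : Part ℕ) := Partrec.none
  exact (Partrec.cond hc hf hg : Partrec fun p : ℕ × ℕ => _)

lemma muNum_translate (ψ : ℕ → ℕ →. ℕ) (hψ : PRNumbering ψ) :
    ∃ g : ℕ → ℕ, Computable g ∧ ∀ e, muNum (g e) = ψ e := by
  have h1 : Partrec fun n : ℕ => ψ n.unpair.1 n.unpair.2 := hψ.comp (Computable.fst.comp Computable.unpair) (Computable.snd.comp Computable.unpair)
  obtain ⟨c, hc⟩ := exists_code.1 (Partrec.nat_iff.1 h1)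
  refine ⟨fun e => Encodable.encode (c.curry e),
    (Primrec.encode.comp (primrec₂_curry.comp (Primrec.const c) Primrec.id)).to_comp, fun e => ?_⟩
  funext x
  simp only [muNum, Denumerable.ofNat_encode, eval_curry, hc, Nat.unpair_pair]

/-- There exists an acceptable numbering without the Kolmogorov property. -/
lemma acceptable_phiNum : Acceptable phiNum := by
  intro ψ hψ
  obtain ⟨g, hg, hge⟩ := muNum_translate ψ hψ
  refine ⟨fun e => g e * g e, Primrec.nat_mul.to_comp.comp hg hg, fun e => ?_⟩
  funext x
  simp [phiNum, Nat.sqrt_eq, hge e]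

/-- There exists an acceptable numbering without the Kolmogorov property: an
acceptable numbering `φ` and a numbering `ψ` such that no constant `c`
satisfies: for every `e` there is `j ≤ c*e + c` with `φ_j = ψ_e`. -/
theorem acceptable_not_kolmogorov :
    ∃ φ ψ : ℕ → ℕ →. ℕ, PRNumbering φ ∧ Acceptable φ ∧ PRNumbering ψ ∧
      ¬ ∃ c : ℕ, ∀ e, ∃ j, j ≤ c * e + c ∧ φ j = ψ e := by
  refine ⟨phiNum, fun e _ => Part.some e, numbering_phiNum, acceptable_phiNum, ?_, ?_⟩
  · exact (Computable.fst.partrec.of_eq fun p => rfl :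
      Partrec fun p : ℕ × ℕ => Part.some p.1)
  · rintro ⟨c, hc⟩
    -- for each e, a witness j with phiNum j = const e; it must be a square with
    -- muNum (sqrt j) = const e, and sqrt j ≤ c whenever e ≤ c+1.
    choose j hj hphi using hc
    have key : ∀ e, muNum (Nat.sqrt (j e)) = fun _ => Part.some e := by
      intro e
      have h0 := congrFun (hphi e) 0
      by_cases hsq : Nat.sqrt (j e) * Nat.sqrt (j e) == j e
      · have : phiNum (j e) = muNum (Nat.sqrt (j e)) := by
          funext x; simp [phiNum, hsq]
        rw [← this, hphi e]
      · exfalso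
        have : phiNum (j e) 0 = Part.none := by
          simp [phiNum, Bool.eq_false_iff.2 hsq]
        rw [h0] at this
        exact Part.some_ne_none e this
    have hinj : Function.Injective fun e : Fin (c + 2) =>
        Nat.sqrt (j e.val) := by
      intro a b hab
      have hab' : Nat.sqrt (j a.val) = Nat.sqrt (j b.val) := hab
      have h1 := key a.val
      rw [hab'] at h1
      have := congrFun (h1.symm.trans (key b.val)) 0
      exact Fin.ext (Part.some_injective this)
    have hlt : ∀ e : Fin (c + 2), Nat.sqrt (j e.val) < c + 1 := by
      intro e
      have h1 : j e.val ≤ c * (c + 1) + c := by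
        calc j e.val ≤ c * e.val + c := hj e.val
        _ ≤ c * (c + 1) + c :=
          Nat.add_le_add_right (Nat.mul_le_mul_left c (Nat.lt_succ_iff.1 e.isLt)) c
      have h2 : j e.val < (c + 1) * (c + 1) := by nlinarith
      exact Nat.sqrt_lt.2 (lt_of_le_of_lt h1 (by nlinarith))
    have : Function.Injective fun e : Fin (c + 2) =>
        (⟨Nat.sqrt (j e.val), hlt e⟩ : Fin (c + 1)) := fun a b h =>
      hinj (congrArg Fin.val h)
    have := Fintype.card_le_of_injective _ this
    simp at this
end

section
/- For every computably bounded numbering φ there exists a computable order g (a computable, nondecreasing, unbounded function g : ℕ → ℕ) such that C(x) ≥ g(x) for every x ∈ MIN_φ. -/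
section Aux

variable {f : ℕ → ℕ}

/-- Partial sums of `f`. -/
private def psum (f : ℕ → ℕ) : ℕ → ℕ
  | 0 => 0
  | m + 1 => psum f m + f m

private lemma psum_mono (f : ℕ → ℕ) : Monotone (psum f) :=
  monotone_nat_of_le_succ fun n => Nat.le_add_right _ _

private lemma le_psum (f : ℕ → ℕ) {q m : ℕ} (h : q < m) : f q ≤ psum f m := by
  induction m with
  | zero => omega
  | succ m ih =>
    rcases Nat.lt_succ_iff_lt_or_eq.1 h with h' | rfl
    · exact (ih h').trans (Nat.le_add_right _ _)
    · exact Nat.le_add_left _ _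

private lemma psum_computable (hf : Computable f) : Computable (psum f) := by
  have : Computable fun m : ℕ =>
      Nat.rec (motive := fun _ => ℕ) 0 (fun y IH => (fun p : ℕ × ℕ => p.2 + f p.1) (y, IH)) m :=
    Computable.nat_rec Computable.id (Computable.const 0)
      (((Primrec.nat_add.to_comp).comp (Computable.snd.comp Computable.snd)
        (hf.comp (Computable.fst.comp Computable.snd))).to₂)
  exact this.of_eq fun m => by
    induction m with
    | zero => rfl
    | succ m ih => simp [psum, ← ih]

end Aux

/-- For every computably bounded numbering there is a computable order `g`
(computable, nondecreasing, unbounded) with `C(x) ≥ g(x)` on minimal indices. -/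
theorem exists_computable_order_le_complexity_on_MIN
    (φ : ℕ → ℕ →. ℕ) (hφ : PRNumbering φ) (hcb : ComputablyBounded φ)
    (U : ℕ →. ℕ) (hU : OptimalMachine U) :
    ∃ g : ℕ → ℕ, Computable g ∧ Monotone g ∧ (∀ m, ∃ x, m ≤ g x) ∧
      ∀ x ∈ MINset φ, g x ≤ Cpx U x := by
  obtain ⟨hUpart, hUopt⟩ := hU
  have hU' : Partrec U := Partrec.nat_iff.2 hUpart
  -- the numbering ψ_p = φ_{U p}
  set ψ : ℕ → ℕ →. ℕ := fun p x => (U p).bind fun e => φ e x with hψdef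
  have hψ : PRNumbering ψ := by
    unfold PRNumbering
    exact (hU'.comp Computable.fst).bind
      ((hφ.comp Computable.snd (Computable.snd.comp Computable.fst)).to₂)
  obtain ⟨f, hfc, hf⟩ := hcb ψ hψ
  -- the bounding function F
  set F : ℕ → ℕ := fun n => n + psum f (2 ^ n) with hFdef
  have hFc : Computable F := by
    have h2 : Computable fun n : ℕ => 2 ^ n := by
      have : Computable fun n : ℕ => Nat.rec (motive := fun _ => ℕ) 1
          (fun y IH => (fun p : ℕ × ℕ => 2 * p.2) (y, IH)) n :=
        Computable.nat_rec Computable.id (Computable.const 1)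
          (((Primrec.nat_mul.to_comp).comp (Computable.const 2)
            (Computable.snd.comp Computable.snd)).to₂)
      exact this.of_eq fun n => by
        induction n with
        | zero => rfl
        | succ n ih => simp only [pow_succ, ← ih]; ring
    exact (Primrec.nat_add.to_comp).comp Computable.id ((psum_computable hfc).comp h2)
  have hFle : ∀ n, n ≤ F n := fun n => Nat.le_add_right _ _
  have hFmono : Monotone F := fun a b hab =>
    Nat.add_le_add hab (psum_mono f (Nat.pow_le_pow_right (by norm_num) hab))
  have hFq : ∀ q n, q < 2 ^ n → f q ≤ F n := fun q n h =>
    (le_psum f h).trans (Nat.le_add_left _ _)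
  have hex : ∀ x : ℕ, ∃ n, x ≤ F n := fun x => ⟨x, hFle x⟩
  refine ⟨fun x => Nat.find (hex x), ?_, ?_, ?_, ?_⟩
  · -- computability
    have hcomp : Computable₂ fun (x n : ℕ) => decide (x ≤ F n) :=
      ((Primrec.nat_le.decide.to_comp).comp Computable.fst (hFc.comp Computable.snd)).to₂
    exact (Partrec.rfind hcomp.partrec₂).of_eq fun x => by
      refine Part.eq_some_iff.2 (Nat.mem_rfind.2 ⟨?_, ?_⟩)
      · simpa using Nat.find_spec (hex x)
      · intro m hm
        simpa using Nat.find_min (hex x) hm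
  · -- monotone
    intro a b hab
    exact Nat.find_le (hab.trans (Nat.find_spec (hex b)))
  · -- unbounded
    intro m
    refine ⟨F m + 1, ?_⟩
    by_contra h
    push_neg at h
    have h1 : F (Nat.find (hex (F m + 1))) ≤ F m := hFmono (by omega)
    have h2 := Nat.find_spec (hex (F m + 1))
    omega
  · -- g x ≤ C x on minimal indices
    intro x hx
    -- the complexity set is nonempty
    obtain ⟨c, hc⟩ := hUopt (fun p => Part.some p)
      (Nat.Partrec.of_primrec Nat.Primrec.id)
    obtain ⟨q0, _, hq0⟩ := hc x trivial
    have hne : {n | ∃ q, U q = Part.some x ∧ Nat.size q = n}.Nonempty :=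
      ⟨Nat.size q0, q0, hq0, rfl⟩
    obtain ⟨q, hUq, hqsize⟩ := Nat.sInf_mem hne
    -- φ_j = ψ_q = φ_x for some j ≤ f q
    obtain ⟨j, hjle, hj⟩ := hf q
    have hψq : ψ q = φ x := by
      funext y
      simp [hψdef, hUq]
    rw [hψq] at hj
    have hxj : x ≤ j := by
      by_contra h
      exact hx j (by omega) hj
    have hq2 : q < 2 ^ Cpx U x := by
      rw [Cpx, ← hqsize]
      exact Nat.lt_size_self q
    have : x ≤ F (Cpx U x) := hxj.trans (hjle.trans (hFq q _ hq2))
    exact Nat.find_le this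
end

section
/- For every computably bounded numbering φ, there is no computable function h : ℕ → ℕ with unbounded range such that h(e) ≤ min_φ(e) for all e. -/
open Nat.Partrec (Code)
open Nat.Partrec.Code

/-- For a computably bounded numbering, no computable function with unbounded
range is a lower bound for `min_φ`. -/
theorem no_unbounded_computable_lower_bound_for_minIndex
    (φ : ℕ → ℕ →. ℕ) (hφ : PRNumbering φ) (hcb : ComputablyBounded φ) :
    ¬ ∃ h : ℕ → ℕ, Computable h ∧ (∀ m, ∃ e, m ≤ h e) ∧
        ∀ e, h e ≤ minIndex φ e := by
  rintro ⟨h, hcomp, hunb, hlow⟩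
  -- the search function g
  set g : ℕ → ℕ := fun m => Nat.find (hunb m) with hgdef
  have hgspec : ∀ m, m ≤ h (g m) := fun m => Nat.find_spec (hunb m)
  have hgcomp : Computable g := by
    have hp : Partrec₂ (fun (m e : ℕ) => (Part.some (decide (m ≤ h e)) : Part Bool)) := by
      exact Computable.partrec (Primrec.nat_le.decide.to_comp.comp Computable.fst (hcomp.comp Computable.snd))
    have := Partrec.rfind hp
    refine this.of_eq fun m => ?_
    refine Part.eq_some_iff.2 (Nat.mem_rfind.2 ⟨?_, fun {m'} hm' => ?_⟩)
    · simp [hgspec m]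
    · have : ¬ m ≤ h m' := Nat.find_min (hunb m) hm'
      simp [this]
  -- the numbering ψ
  set ψ : ℕ → ℕ →. ℕ := fun n x =>
    ((Denumerable.ofNat Code n.unpair.1).eval n.unpair.2).bind
      (fun m => φ (g (m + 1)) x) with hψdef
  have hψ : Partrec₂ ψ := by
    have h1 : Partrec fun p : ℕ × ℕ =>
        (Denumerable.ofNat Code p.1.unpair.1).eval p.1.unpair.2 :=
      eval_part.comp
        ((Computable.ofNat Code).comp
          ((Primrec.fst.comp (Primrec.unpair.comp Primrec.fst)).to_comp))
        ((Primrec.snd.comp (Primrec.unpair.comp Primrec.fst)).to_comp)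
    have h2 : Partrec fun q : (ℕ × ℕ) × ℕ => φ (g (q.2 + 1)) q.1.2 :=
      hφ.comp (hgcomp.comp (Primrec.succ.to_comp.comp Computable.snd))
        ((Primrec.snd.comp Primrec.fst).to_comp)
    exact h1.bind h2.to₂
  obtain ⟨f, hf, hfspec⟩ := hcb ψ hψ
  -- fixed point
  have hF : Partrec₂ fun (c : Code) (e : ℕ) =>
      (Part.some (f (Nat.pair (Encodable.encode c) e)) : Part ℕ) :=
    Computable.partrec (hf.comp
      ((Primrec₂.natPair.comp (Primrec.encode.comp Primrec.fst) Primrec.snd).to_comp))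
  obtain ⟨c, hc⟩ := fixed_point₂ hF
  set n : ℕ := Nat.pair (Encodable.encode c) 0 with hn
  have hceval : eval c 0 = Part.some (f n) := by rw [hc]
  have hψn : ψ n = φ (g (f n + 1)) := by
    funext x
    simp only [hψdef, hn, Nat.unpair_pair, Denumerable.ofNat_encode, hceval, Part.bind_some]
  obtain ⟨j, hj, hjeq⟩ := hfspec n
  have h1 : minIndex φ (g (f n + 1)) ≤ j :=
    Nat.sInf_le (show φ j = φ (g (f n + 1)) from hjeq.trans hψn)
  have h2 : f n + 1 ≤ h (g (f n + 1)) := hgspec (f n + 1)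
  have h3 := hlow (g (f n + 1))
  omega
end
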